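/- Let S = {x_1,...,x_n} be a gcd-closed set, e a positive integer, and 1 ≤ k, m ≤ n with gcd(x_k, x_m) divisible-compatible in the sense that gcd(x_k, x_m) divides gcd of all greatest-type divisors of x_m. Then g(k,m) = x_k^e / gcd(x_k, x_m)^e, in particular g(k,m) is a positive integer. Here g(k,m) = (1/α_{e,S}(x_m)) · Σ_{x_r | x_m} c_{rm} · lcm(x_k, x_r)^e. -/

import Mathlib

open Finset

/-- `(ξ_e * μ)(d)`: Dirichlet convolution of `n ↦ n^e` with the Möbius function. -/
def xiMu (e d : ℕ) : ℤ :=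
  ∑ a ∈ d.divisors, (a : ℤ) ^ e * ArithmeticFunction.moebius (d / a)

/-- `α_{e,S}(x) = Σ_{d ∣ x, d ∤ y for all y ∈ S with y < x} (ξ_e * μ)(d)`. -/
def alphaES (e : ℕ) (S : Finset ℕ) (x : ℕ) : ℤ :=
  ∑ d ∈ x.divisors.filter (fun d => ∀ y ∈ S, y < x → ¬ d ∣ y), xiMu e d

/-- The set of greatest-type divisors of `x` in `S`. -/
def GS (S : Finset ℕ) (x : ℕ) : Finset ℕ :=
  S.filter (fun y => y ∣ x ∧ y < x ∧ ∀ z ∈ S, y ∣ z → z ∣ x → z = y ∨ z = x)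

/-- An element `x` satisfies condition 𝒞 relative to `S`. -/
def condCElem (S : Finset ℕ) (x : ℕ) : Prop :=
  ∀ y ∈ GS S x, ∀ z ∈ GS S x, y ≠ z → Nat.lcm y z = x ∧ Nat.gcd y z ∈ GS S y ∩ GS S z

/-- A set satisfies condition 𝒞 if every element with at least two
greatest-type divisors satisfies condition 𝒞. -/
def condCSet (S : Finset ℕ) : Prop :=
  ∀ x ∈ S, 2 ≤ (GS S x).card → condCElem S x

/-- `A_S(a,b) = {u ∈ S : a ∣ u ∣ b, u ≠ a}`. -/
def AS (S : Finset ℕ) (a b : ℕ) : Finset ℕ :=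
  S.filter (fun u => a ∣ u ∧ u ∣ b ∧ u ≠ a)

/-- `c_{rm}` (with `xr, xm` the actual elements): sum of `μ(d)` over `d` with
`d·xr ∣ xm` and `d·xr ∤ t` for all `t ∈ S` with `t < xm`. -/
def cCoef (S : Finset ℕ) (xr xm : ℕ) : ℤ :=
  ∑ d ∈ xm.divisors.filter (fun d => d * xr ∣ xm ∧ ∀ t ∈ S, t < xm → ¬ d * xr ∣ t),
    ArithmeticFunction.moebius d

/-- `g(k,m)` (with `xk, xm` the actual elements). -/
noncomputable def gFun (e : ℕ) (S : Finset ℕ) (xk xm : ℕ) : ℚ :=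
  (1 / (alphaES e S xm : ℚ)) *
    ∑ r ∈ S.filter (fun r => r ∣ xm), (cCoef S r xm : ℚ) * (Nat.lcm xk r : ℚ) ^ e

lemma xiMu_sum (e : ℕ) : ∀ n : ℕ, 0 < n → ∑ d ∈ n.divisors, xiMu e d = (n : ℤ) ^ e := by
  rw [ArithmeticFunction.sum_eq_iff_sum_mul_moebius_eq]
  intro n hn
  simp only [Int.cast_id]
  rw [Nat.sum_divisorsAntidiagonal' (f := fun x y => (ArithmeticFunction.moebius x : ℤ) * (y : ℤ) ^ e)]
  unfold xiMu
  exact Finset.sum_congr rfl fun i _ => mul_comm _ _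

open ArithmeticFunction ArithmeticFunction.Moebius ArithmeticFunction.zeta in
lemma xiMu_eq_F (e d : ℕ) :
    xiMu e d = (((pow e : ArithmeticFunction ℕ) : ArithmeticFunction ℤ) * μ) d := by
  rw [ArithmeticFunction.mul_apply]
  rw [Nat.sum_divisorsAntidiagonal (f := fun x y =>
    (((pow e : ArithmeticFunction ℕ) : ArithmeticFunction ℤ) x) * (μ y : ℤ))]
  unfold xiMu
  refine Finset.sum_congr rfl fun i hi => ?_
  have hi0 : 0 < i := Nat.pos_of_mem_divisors hi
  simp [ArithmeticFunction.pow_apply, hi0.ne']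

open ArithmeticFunction ArithmeticFunction.Moebius ArithmeticFunction.zeta in
lemma xiMu_pos (e : ℕ) (he : 0 < e) : ∀ n : ℕ, 0 < n → 0 < xiMu e n := by
  have hmul : (((pow e : ArithmeticFunction ℕ) : ArithmeticFunction ℤ) * μ).IsMultiplicative :=
    ((isMultiplicative_pow).natCast).mul isMultiplicative_moebius
  intro n
  induction n using Nat.recOnPosPrimePosCoprime with
  | prime_pow p k hp hk =>
    intro _
    have hpp : p.Prime := hp
    unfold xiMu
    obtain ⟨k, rfl⟩ : ∃ m, k = m + 1 := ⟨k - 1, by omega⟩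
    rw [Nat.sum_divisors_prime_pow hpp]
    rw [Finset.sum_range_succ, Finset.sum_range_succ]
    have h1 : ∀ i ∈ Finset.range k,
        ((p ^ i : ℕ) : ℤ) ^ e * (μ (p ^ (k + 1) / p ^ i) : ℤ) = 0 := by
      intro i hi
      simp only [Finset.mem_range] at hi
      rw [Nat.pow_div (by omega) hpp.pos]
      rw [moebius_apply_prime_pow hpp (by omega)]
      rw [if_neg (by omega)]
      ring
    rw [Finset.sum_congr rfl h1, Finset.sum_const_zero]
    rw [Nat.pow_div (by omega) hpp.pos, Nat.pow_div (by omega) hpp.pos]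
    have hk1 : k + 1 - k = 1 := by omega
    have hk0 : k + 1 - (k + 1) = 0 := by omega
    rw [hk1, hk0, pow_one, pow_zero]
    rw [moebius_apply_prime hpp, moebius_apply_one]
    have hlt : ((p ^ k : ℕ) : ℤ) ^ e < ((p ^ (k + 1) : ℕ) : ℤ) ^ e := by
      have h2 : (p : ℤ) ^ k < (p : ℤ) ^ (k + 1) :=
        pow_lt_pow_right₀ (by exact_mod_cast hpp.one_lt) (by omega)
      push_cast
      exact pow_lt_pow_left₀ h2 (by positivity) (by omega)
    nlinarith [hlt]
  | zero => intro h; omega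
  | one => intro _; simp [xiMu]
  | coprime a b ha hb hab iha ihb =>
    intro _
    rw [xiMu_eq_F, hmul.map_mul_of_coprime hab, ← xiMu_eq_F, ← xiMu_eq_F]
    exact mul_pos (iha (by omega)) (ihb (by omega))

open ArithmeticFunction ArithmeticFunction.Moebius ArithmeticFunction.zeta in
lemma moebius_sum_div (n : ℕ) (hn : 0 < n) :
    ∑ d ∈ n.divisors, (μ d : ℤ) = if n = 1 then 1 else 0 := by
  calc ∑ d ∈ n.divisors, (μ d : ℤ) = (μ * ζ : ArithmeticFunction ℤ) n := by
        rw [coe_mul_zeta_apply]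
    _ = (1 : ArithmeticFunction ℤ) n := by rw [moebius_mul_coe_zeta]
    _ = if n = 1 then 1 else 0 := ArithmeticFunction.one_apply

open ArithmeticFunction ArithmeticFunction.Moebius ArithmeticFunction.zeta in
lemma sumF (e : ℕ) (S : Finset ℕ) (g : ℕ) (hposS : ∀ a ∈ S, 0 < a) (n : ℕ) (hn : 0 < n) :
    ∑ D ∈ n.divisors, ∑ r ∈ S.filter (· ∣ D), (μ (D / r) : ℤ) * (Nat.lcm g r : ℤ) ^ e
      = if n ∈ S then (Nat.lcm g n : ℤ) ^ e else 0 := by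
  rw [Finset.sum_comm' (s' := fun r => n.divisors.filter (r ∣ ·)) (t' := S.filter (· ∣ n))
    (h := by
      intro D r
      simp only [Nat.mem_divisors, Finset.mem_filter]
      constructor
      · rintro ⟨⟨h1, h2⟩, h3, h4⟩
        exact ⟨⟨⟨h1, h2⟩, h4⟩, h3, h4.trans h1⟩
      · rintro ⟨⟨⟨h1, h2⟩, h4⟩, h3, _⟩
        exact ⟨⟨h1, h2⟩, h3, h4⟩)]
  have inner : ∀ r ∈ S.filter (· ∣ n),
      ∑ D ∈ n.divisors.filter (r ∣ ·), (μ (D / r) : ℤ) * (Nat.lcm g r : ℤ) ^ e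
        = (if r = n then 1 else 0) * (Nat.lcm g r : ℤ) ^ e := by
    intro r hr
    simp only [Finset.mem_filter] at hr
    obtain ⟨hrS, hrn⟩ := hr
    have hr0 : 0 < r := hposS r hrS
    rw [← Finset.sum_mul]
    congr 1
    have key : ∑ D ∈ n.divisors.filter (r ∣ ·), (μ (D / r) : ℤ)
        = ∑ c ∈ (n / r).divisors, (μ c : ℤ) := by
      apply Finset.sum_nbij' (i := fun D => D / r) (j := fun c => c * r)
      · intro D hD
        simp only [Finset.mem_filter, Nat.mem_divisors] at hD ⊢
        obtain ⟨⟨h1, h2⟩, h3⟩ := hD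
        obtain ⟨c, rfl⟩ := h3
        rw [Nat.mul_div_cancel_left c hr0]
        constructor
        · rw [Nat.dvd_div_iff_mul_dvd hrn]; exact h1
        · exact (Nat.div_pos (Nat.le_of_dvd (Nat.pos_of_ne_zero h2)
            (dvd_trans (dvd_mul_right r c) h1)) hr0).ne'
      · intro c hc
        simp only [Nat.mem_divisors, Finset.mem_filter] at hc ⊢
        obtain ⟨h1, h2⟩ := hc
        rw [Nat.dvd_div_iff_mul_dvd hrn] at h1
        exact ⟨⟨by rwa [mul_comm] at h1, hn.ne'⟩, dvd_mul_left r c⟩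
      · intro D hD
        simp only [Finset.mem_filter, Nat.mem_divisors] at hD
        exact Nat.div_mul_cancel hD.2
      · intro c hc
        rw [mul_comm, Nat.mul_div_cancel_left c hr0]
      · intro D hD; rfl
    rw [key, moebius_sum_div _ (Nat.div_pos (Nat.le_of_dvd hn hrn) hr0)]
    obtain ⟨c, rfl⟩ := hrn
    have hrpos := hr0
    rw [Nat.mul_div_cancel_left c hr0]
    by_cases hc : c = 1
    · subst hc; simp
    · have : r ≠ r * c := by
        intro h
        nth_rewrite 1 [← mul_one r] at h
        exact hc (Nat.eq_of_mul_eq_mul_left hr0 h).symm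
      simp [hc, this]
  rw [Finset.sum_congr rfl inner]
  simp only [ite_mul, one_mul, zero_mul]
  rw [Finset.sum_ite_eq' (S.filter (· ∣ n)) n (fun r => (Nat.lcm g r : ℤ) ^ e)]
  simp [Finset.mem_filter]

lemma sum_biUnion_divisors_eq_zero (W : ℕ → ℤ) (T : ℕ → Prop)
    (hTgcd : ∀ a b, T a → T b → T (Nat.gcd a b))
    (hTpos : ∀ a, T a → 0 < a)
    (hTsum : ∀ a, T a → ∑ D ∈ Nat.divisors a, W D = 0) :
    ∀ n (A : Finset ℕ), A.card ≤ n → (∀ a ∈ A, T a) →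
      ∑ D ∈ A.biUnion Nat.divisors, W D = 0 := by
  intro n
  induction n with
  | zero =>
    intro A hcard _
    have : A = ∅ := Finset.card_eq_zero.mp (Nat.le_zero.mp hcard)
    subst this
    simp
  | succ n ih =>
    intro A hcard hA
    rcases A.eq_empty_or_nonempty with rfl | ⟨a, ha⟩
    · simp
    · have hA' : A = insert a (A.erase a) := (Finset.insert_erase ha).symm
      rw [hA', Finset.biUnion_insert]
      have hTa := hA a ha
      have h1 : ∑ D ∈ Nat.divisors a, W D = 0 := hTsum a hTa
      have hcard' : (A.erase a).card ≤ n := by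
        have := Finset.card_erase_of_mem ha
        omega
      have h2 : ∑ D ∈ (A.erase a).biUnion Nat.divisors, W D = 0 :=
        ih (A.erase a) hcard' (fun b hb => hA b (Finset.mem_of_mem_erase hb))
      have h3 : Nat.divisors a ∩ (A.erase a).biUnion Nat.divisors
          = ((A.erase a).image (Nat.gcd a)).biUnion Nat.divisors := by
        ext D
        simp only [Finset.mem_inter, Finset.mem_biUnion, Finset.mem_image, Nat.mem_divisors]
        constructor
        · rintro ⟨⟨hDa, ha0⟩, b, hb, hDb, hb0⟩
          exact ⟨Nat.gcd a b, ⟨b, hb, rfl⟩, Nat.dvd_gcd hDa hDb,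
            (Nat.gcd_pos_of_pos_left b (hTpos a hTa)).ne'⟩
        · rintro ⟨c, ⟨b, hb, rfl⟩, hDc, hc0⟩
          refine ⟨⟨hDc.trans (Nat.gcd_dvd_left a b), (hTpos a hTa).ne'⟩,
            b, hb, hDc.trans (Nat.gcd_dvd_right a b),
            (hTpos b (hA b (Finset.mem_of_mem_erase hb))).ne'⟩
      have h4 : ∑ D ∈ Nat.divisors a ∩ (A.erase a).biUnion Nat.divisors, W D = 0 := by
        rw [h3]
        refine ih _ ?_ ?_
        · exact le_trans (Finset.card_image_le) hcard'
        · rintro c hc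
          rw [Finset.mem_image] at hc
          obtain ⟨b, hb, rfl⟩ := hc
          exact hTgcd a b hTa (hA b (Finset.mem_of_mem_erase hb))
      have := Finset.sum_union_inter (s₁ := Nat.divisors a)
        (s₂ := (A.erase a).biUnion Nat.divisors) (f := W)
      rw [h1, h2, h4] at this
      omega

open ArithmeticFunction ArithmeticFunction.Moebius ArithmeticFunction.zeta in
lemma sum_cCoef_eq (S : Finset ℕ) (hposS : ∀ a ∈ S, 0 < a) (xm : ℕ) (hxm : 0 < xm)
    (f : ℕ → ℤ) :
    ∑ r ∈ S.filter (· ∣ xm), cCoef S r xm * f r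
      = ∑ D ∈ xm.divisors.filter (fun D => ∀ t ∈ S, t < xm → ¬ D ∣ t),
          ∑ r ∈ S.filter (· ∣ D), (μ (D / r) : ℤ) * f r := by
  have L : ∑ r ∈ S.filter (· ∣ xm), cCoef S r xm * f r
      = ∑ p ∈ (S.filter (· ∣ xm)).sigma (fun r => xm.divisors.filter
          (fun d => d * r ∣ xm ∧ ∀ t ∈ S, t < xm → ¬ d * r ∣ t)),
          (μ p.2 : ℤ) * f p.1 := by
    rw [Finset.sum_sigma]
    refine Finset.sum_congr rfl fun r _ => ?_
    rw [cCoef, Finset.sum_mul]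
  have R : ∑ D ∈ xm.divisors.filter (fun D => ∀ t ∈ S, t < xm → ¬ D ∣ t),
        ∑ r ∈ S.filter (· ∣ D), (μ (D / r) : ℤ) * f r
      = ∑ q ∈ (xm.divisors.filter (fun D => ∀ t ∈ S, t < xm → ¬ D ∣ t)).sigma
          (fun D => S.filter (· ∣ D)), (μ (q.1 / q.2) : ℤ) * f q.2 := by
    rw [Finset.sum_sigma]
  rw [L, R]
  apply Finset.sum_nbij' (i := fun p => ⟨p.2 * p.1, p.1⟩) (j := fun q => ⟨q.2, q.1 / q.2⟩)
  · rintro ⟨r, d⟩ hp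
    simp only [Finset.mem_sigma, Finset.mem_filter, Nat.mem_divisors] at hp ⊢
    obtain ⟨⟨hrS, hrxm⟩, ⟨hd, hdr, hP⟩⟩ := hp
    exact ⟨⟨⟨hdr, hxm.ne'⟩, hP⟩, hrS, dvd_mul_left r d⟩
  · rintro ⟨D, r⟩ hq
    simp only [Finset.mem_sigma, Finset.mem_filter, Nat.mem_divisors] at hq ⊢
    obtain ⟨⟨⟨hD, _⟩, hP⟩, hrS, hrD⟩ := hq
    rw [Nat.div_mul_cancel hrD]
    exact ⟨⟨hrS, hrD.trans hD⟩, ⟨(Nat.div_dvd_of_dvd hrD).trans hD, hxm.ne'⟩, hD, hP⟩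
  · rintro ⟨r, d⟩ hp
    simp only [Finset.mem_sigma, Finset.mem_filter, Nat.mem_divisors] at hp
    have hr0 : 0 < r := hposS r hp.1.1
    simp only [Sigma.mk.inj_iff, heq_eq_eq]
    refine ⟨trivial, ?_⟩
    rw [mul_comm, Nat.mul_div_cancel_left d hr0]
  · rintro ⟨D, r⟩ hq
    simp only [Finset.mem_sigma, Finset.mem_filter, Nat.mem_divisors] at hq
    simp only [Sigma.mk.inj_iff, heq_eq_eq]
    exact ⟨Nat.div_mul_cancel hq.2.2, trivial⟩
  · rintro ⟨r, d⟩ hp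
    simp only [Finset.mem_sigma, Finset.mem_filter, Nat.mem_divisors] at hp
    have hr0 : 0 < r := hposS r hp.1.1
    have hdc : d * r / r = d := by rw [mul_comm, Nat.mul_div_cancel_left d hr0]
    simp only [hdc]
    try ring

lemma exists_gtd (S : Finset ℕ) (hpos : ∀ a ∈ S, 0 < a)
    (hgcd : ∀ a ∈ S, ∀ b ∈ S, Nat.gcd a b ∈ S) (xm : ℕ) (hm : xm ∈ S)
    (D t : ℕ) (ht : t ∈ S) (htlt : t < xm) (hDt : D ∣ t) (hDm : D ∣ xm) :
    ∃ y ∈ GS S xm, D ∣ y := by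
  have hxm0 : 0 < xm := hpos xm hm
  set y0 := Nat.gcd t xm with hy0
  have hy0S : y0 ∈ S := hgcd t ht xm hm
  have hy0m : y0 ∣ xm := Nat.gcd_dvd_right t xm
  have hy0t : y0 ∣ t := Nat.gcd_dvd_left t xm
  have hDy0 : D ∣ y0 := Nat.dvd_gcd hDt hDm
  have ht0 : 0 < t := hpos t ht
  have hy0ne : y0 ≠ xm := by
    intro h
    have := Nat.le_of_dvd ht0 (h ▸ hy0t)
    omega
  set C := S.filter (fun z => y0 ∣ z ∧ z ∣ xm ∧ z ≠ xm) with hC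
  have hCne : C.Nonempty := ⟨y0, by simp [hC, Finset.mem_filter, hy0S, hy0m, hy0ne]⟩
  set y := C.max' hCne with hy
  have hyC : y ∈ C := C.max'_mem hCne
  simp only [hC, Finset.mem_filter] at hyC
  obtain ⟨hyS, hy0y, hym, hyne⟩ := hyC
  refine ⟨y, ?_, hDy0.trans hy0y⟩
  simp only [GS, Finset.mem_filter]
  refine ⟨hyS, hym, lt_of_le_of_ne (Nat.le_of_dvd hxm0 hym) hyne, ?_⟩
  intro z hz hyz hzm
  by_cases hzxm : z = xm
  · right; exact hzxm
  · left
    have hzC : z ∈ C := by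
      simp only [hC, Finset.mem_filter]
      exact ⟨hz, hy0y.trans hyz, hzm, hzxm⟩
    have h1 : z ≤ y := C.le_max' z hzC
    have h2 : y ≤ z := Nat.le_of_dvd (hpos z hz) hyz
    omega

lemma filter_eq_sdiff (S : Finset ℕ) (hpos : ∀ a ∈ S, 0 < a)
    (hgcd : ∀ a ∈ S, ∀ b ∈ S, Nat.gcd a b ∈ S) (xm : ℕ) (hm : xm ∈ S) :
    xm.divisors.filter (fun D => ∀ t ∈ S, t < xm → ¬ D ∣ t)
      = xm.divisors \ (GS S xm).biUnion Nat.divisors := by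
  ext D
  simp only [Finset.mem_filter, Finset.mem_sdiff, Finset.mem_biUnion, Nat.mem_divisors]
  constructor
  · rintro ⟨⟨hD, h0⟩, hP⟩
    refine ⟨⟨hD, h0⟩, ?_⟩
    rintro ⟨y, hy, hDy, hy0⟩
    simp only [GS, Finset.mem_filter] at hy
    exact hP y hy.1 hy.2.2.1 hDy
  · rintro ⟨⟨hD, h0⟩, hU⟩
    refine ⟨⟨hD, h0⟩, ?_⟩
    intro t ht htlt hDt
    obtain ⟨y, hy, hDy⟩ := exists_gtd S hpos hgcd xm hm D t ht htlt hDt hD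
    have hy0 : 0 < y := by
      simp only [GS, Finset.mem_filter] at hy
      exact hpos y hy.1
    exact hU ⟨y, hy, hDy, hy0.ne'⟩

lemma lcm_of_dvd {g a : ℕ} (hg : 0 < g) (h : g ∣ a) : Nat.lcm g a = a := by
  have h1 := Nat.gcd_mul_lcm g a
  rw [Nat.gcd_eq_left h] at h1
  exact Nat.eq_of_mul_eq_mul_left hg h1

open ArithmeticFunction ArithmeticFunction.Moebius ArithmeticFunction.zeta in
lemma key_sum (e : ℕ) (S : Finset ℕ) (hpos : ∀ a ∈ S, 0 < a)
    (hgcd : ∀ a ∈ S, ∀ b ∈ S, Nat.gcd a b ∈ S) (xm : ℕ) (hm : xm ∈ S)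
    (g : ℕ) (hg0 : 0 < g) (hgS : g ∈ S) (hgm : g ∣ xm)
    (hgy : ∀ y ∈ GS S xm, g ∣ y) :
    ∑ r ∈ S.filter (· ∣ xm), cCoef S r xm * (Nat.lcm g r : ℤ) ^ e = alphaES e S xm := by
  have hxm : 0 < xm := hpos xm hm
  rw [sum_cCoef_eq S hpos xm hxm (fun r => (Nat.lcm g r : ℤ) ^ e)]
  show _ = alphaES e S xm
  unfold alphaES
  rw [filter_eq_sdiff S hpos hgcd xm hm]
  have hsub : (GS S xm).biUnion Nat.divisors ⊆ xm.divisors := by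
    intro D hD
    rw [Finset.mem_biUnion] at hD
    obtain ⟨y, hy, hDy⟩ := hD
    simp only [GS, Finset.mem_filter] at hy
    exact Nat.divisors_subset_of_dvd hxm.ne' hy.2.1 hDy
  rw [Finset.sum_sdiff_eq_sub hsub, Finset.sum_sdiff_eq_sub hsub]
  have hdiv1 : ∑ D ∈ xm.divisors, ∑ r ∈ S.filter (· ∣ D), (μ (D / r) : ℤ) * (Nat.lcm g r : ℤ) ^ e
      = (xm : ℤ) ^ e := by
    rw [sumF e S g hpos xm hxm, if_pos hm, lcm_of_dvd hg0 hgm]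
  have hdiv2 := xiMu_sum e xm hxm
  have hU : ∑ D ∈ (GS S xm).biUnion Nat.divisors,
      ((∑ r ∈ S.filter (· ∣ D), (μ (D / r) : ℤ) * (Nat.lcm g r : ℤ) ^ e) - xiMu e D) = 0 := by
    apply sum_biUnion_divisors_eq_zero _ (fun a => a ∈ S ∧ g ∣ a)
      (fun a b ha hb => ⟨hgcd a ha.1 b hb.1, Nat.dvd_gcd ha.2 hb.2⟩)
      (fun a ha => hpos a ha.1) _ (GS S xm).card _ le_rfl
    · intro a hy
      simp only [GS, Finset.mem_filter] at hy
      exact ⟨hy.1, hgy a (by simp only [GS, Finset.mem_filter]; exact hy)⟩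
    · intro a ha
      have ha0 : 0 < a := hpos a ha.1
      rw [Finset.sum_sub_distrib, sumF e S g hpos a ha0, if_pos ha.1,
        lcm_of_dvd hg0 ha.2, xiMu_sum e a ha0, sub_self]
  rw [Finset.sum_sub_distrib] at hU
  rw [hdiv1, hdiv2]
  omega

lemma alphaES_pos (e : ℕ) (he : 0 < e) (S : Finset ℕ) (hpos : ∀ a ∈ S, 0 < a)
    (xm : ℕ) (hm : xm ∈ S) : 0 < alphaES e S xm := by
  have hxm : 0 < xm := hpos xm hm
  unfold alphaES
  apply Finset.sum_pos
  · intro d hd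
    simp only [Finset.mem_filter, Nat.mem_divisors] at hd
    exact xiMu_pos e he d (Nat.pos_of_dvd_of_pos hd.1.1 hxm)
  · refine ⟨xm, ?_⟩
    simp only [Finset.mem_filter, Nat.mem_divisors]
    refine ⟨⟨dvd_rfl, hxm.ne'⟩, ?_⟩
    intro t ht htlt hdvd
    exact absurd (Nat.le_of_dvd (hpos t ht) hdvd) (by omega)

lemma lcm_scale (xk xm r : ℕ) (hxk : 0 < xk) (hr : 0 < r) (hrm : r ∣ xm) :
    Nat.gcd xk xm * Nat.lcm xk r = xk * Nat.lcm (Nat.gcd xk xm) r := by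
  set g := Nat.gcd xk xm with hg
  have hgk : g ∣ xk := Nat.gcd_dvd_left xk xm
  have hgcds : Nat.gcd xk r = Nat.gcd g r := by
    rw [hg, Nat.gcd_assoc, Nat.gcd_comm xm r, Nat.gcd_eq_left hrm]
  have hgcd0 : 0 < Nat.gcd xk r := Nat.gcd_pos_of_pos_left r hxk
  apply Nat.eq_of_mul_eq_mul_right hgcd0
  have h1 : Nat.lcm xk r * Nat.gcd xk r = xk * r := by
    rw [mul_comm]; exact Nat.gcd_mul_lcm xk r
  have h2 : Nat.lcm g r * Nat.gcd g r = g * r := by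
    rw [mul_comm]; exact Nat.gcd_mul_lcm g r
  calc g * Nat.lcm xk r * Nat.gcd xk r = g * (Nat.lcm xk r * Nat.gcd xk r) := by ring
    _ = g * (xk * r) := by rw [h1]
    _ = xk * (g * r) := by ring
    _ = xk * (Nat.lcm g r * Nat.gcd g r) := by rw [h2]
    _ = xk * Nat.lcm g r * Nat.gcd xk r := by rw [hgcds]; ring

theorem gFun_eq_of_gcd_dvd (e : ℕ) (he : 0 < e) (S : Finset ℕ)
    (hpos : ∀ a ∈ S, 0 < a) (hgcd : ∀ a ∈ S, ∀ b ∈ S, Nat.gcd a b ∈ S)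
    (xk xm : ℕ) (hk : xk ∈ S) (hm : xm ∈ S)
    (hG : (GS S xm).Nonempty)
    (hdvd : Nat.gcd xk xm ∣ (GS S xm).gcd id) :
    gFun e S xk xm = (xk : ℚ) ^ e / ((Nat.gcd xk xm : ℕ) : ℚ) ^ e ∧
      ∃ N : ℕ, 0 < N ∧ gFun e S xk xm = (N : ℚ) := by
  have hxk : 0 < xk := hpos xk hk
  have hxm : 0 < xm := hpos xm hm
  set g := Nat.gcd xk xm with hg
  have hg0 : 0 < g := Nat.gcd_pos_of_pos_left xm hxk
  have hgS : g ∈ S := hgcd xk hk xm hm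
  have hgm : g ∣ xm := Nat.gcd_dvd_right xk xm
  have hgk : g ∣ xk := Nat.gcd_dvd_left xk xm
  have hgy : ∀ y ∈ GS S xm, g ∣ y := fun y hy =>
    hdvd.trans (Finset.gcd_dvd hy)
  have key := key_sum e S hpos hgcd xm hm g hg0 hgS hgm hgy
  have hα : 0 < alphaES e S xm := alphaES_pos e he S hpos xm hm
  have hαQ : ((alphaES e S xm : ℤ) : ℚ) ≠ 0 := by exact_mod_cast hα.ne'
  have hgQ : ((g : ℕ) : ℚ) ≠ 0 := by exact_mod_cast hg0.ne'
  -- the scaled sum identity over ℤ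
  have hscale : ∀ r ∈ S.filter (· ∣ xm),
      (g : ℤ) ^ e * ((Nat.lcm xk r : ℤ) ^ e) = (xk : ℤ) ^ e * (Nat.lcm g r : ℤ) ^ e := by
    intro r hr
    simp only [Finset.mem_filter] at hr
    have := lcm_scale xk xm r hxk (hpos r hr.1) hr.2
    calc (g : ℤ) ^ e * (Nat.lcm xk r : ℤ) ^ e = ((g * Nat.lcm xk r : ℕ) : ℤ) ^ e := by
          push_cast; ring
      _ = ((xk * Nat.lcm g r : ℕ) : ℤ) ^ e := by rw [this]
      _ = (xk : ℤ) ^ e * (Nat.lcm g r : ℤ) ^ e := by push_cast; ring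
  have hZ : (g : ℤ) ^ e * ∑ r ∈ S.filter (· ∣ xm), cCoef S r xm * (Nat.lcm xk r : ℤ) ^ e
      = (xk : ℤ) ^ e * alphaES e S xm := by
    rw [Finset.mul_sum, ← key, Finset.mul_sum]
    refine Finset.sum_congr rfl fun r hr => ?_
    have := hscale r hr
    calc (g : ℤ) ^ e * (cCoef S r xm * (Nat.lcm xk r : ℤ) ^ e)
        = cCoef S r xm * ((g : ℤ) ^ e * (Nat.lcm xk r : ℤ) ^ e) := by ring
      _ = cCoef S r xm * ((xk : ℤ) ^ e * (Nat.lcm g r : ℤ) ^ e) := by rw [this]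
      _ = (xk : ℤ) ^ e * (cCoef S r xm * (Nat.lcm g r : ℤ) ^ e) := by ring
  -- cast to ℚ
  have hQ : ((g : ℕ) : ℚ) ^ e * ∑ r ∈ S.filter (· ∣ xm), (cCoef S r xm : ℚ) * (Nat.lcm xk r : ℚ) ^ e
      = ((xk : ℕ) : ℚ) ^ e * ((alphaES e S xm : ℤ) : ℚ) := by
    exact_mod_cast congrArg (fun z : ℤ => (z : ℚ)) hZ
  have hmain : gFun e S xk xm = (xk : ℚ) ^ e / ((g : ℕ) : ℚ) ^ e := by
    unfold gFun
    have hsum : ∑ r ∈ S.filter (fun r => r ∣ xm), (cCoef S r xm : ℚ) * (Nat.lcm xk r : ℚ) ^ e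
        = (xk : ℚ) ^ e * ((alphaES e S xm : ℤ) : ℚ) / ((g : ℕ) : ℚ) ^ e := by
      field_simp at hQ ⊢
      linarith [hQ]
    rw [hsum]
    field_simp
  refine ⟨hmain, ⟨(xk / g) ^ e, ?_, ?_⟩⟩
  · have : 0 < xk / g := Nat.div_pos (Nat.le_of_dvd hxk hgk) hg0
    positivity
  · rw [hmain]
    have hcast : ((xk / g : ℕ) : ℚ) = (xk : ℚ) / ((g : ℕ) : ℚ) := by
      rw [eq_div_iff hgQ]
      exact_mod_cast Nat.div_mul_cancel hgk
    push_cast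
    rw [hcast, div_pow]
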